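/- arXiv:2410.02708 — 2 statements merged into one kernel-verified Lean document; each statement's English description precedes it below -/
import Mathlib

section
/- Let c > 0 and M₀, κ, N₀, K₀, K₂ ∈ ℝ. Define E(A₁,A₂) = (M₀κ/(2c))(A₁² + 2A₂²) + (N₀/c)A₁A₂² + (K₀/(4c))A₁⁴ + (K₂/c)A₁²A₂² + ((K₀+K₂)/(2c))A₂⁴ and the vector field f(A₁,A₂) = (−(1/c)(M₀κA₁ + N₀A₂² + K₀A₁³ + 2K₂A₁A₂²), −(1/c)(M₀κA₂ + N₀A₁A₂ + (K₀+K₂)A₂³ + K₂A₂A₁²)). Then ∇E(A₁,A₂)·f(A₁,A₂) = −f₁(A₁,A₂)² − 2f₂(A₁,A₂)² for all (A₁,A₂) ∈ ℝ². -/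
/-- Lyapunov identity for the reduced travelling-front system on the hexagonal
lattice: `∇E · f = −f₁² − 2f₂²`. -/
theorem hexagonal_lyapunov_identity (c M₀ κ N₀ K₀ K₂ : ℝ) (hc : 0 < c) :
    let E : ℝ → ℝ → ℝ := fun A₁ A₂ =>
      (M₀*κ/(2*c))*(A₁^2 + 2*A₂^2) + (N₀/c)*(A₁*A₂^2) + (K₀/(4*c))*A₁^4
        + (K₂/c)*(A₁^2*A₂^2) + ((K₀+K₂)/(2*c))*A₂^4
    let f₁ : ℝ → ℝ → ℝ := fun A₁ A₂ =>
      -(1/c)*(M₀*κ*A₁ + N₀*A₂^2 + K₀*A₁^3 + 2*K₂*A₁*A₂^2)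
    let f₂ : ℝ → ℝ → ℝ := fun A₁ A₂ =>
      -(1/c)*(M₀*κ*A₂ + N₀*A₁*A₂ + (K₀+K₂)*A₂^3 + K₂*A₂*A₁^2)
    ∀ A₁ A₂ g₁ g₂ : ℝ,
      HasDerivAt (fun x => E x A₂) g₁ A₁ →
      HasDerivAt (fun y => E A₁ y) g₂ A₂ →
      g₁ * f₁ A₁ A₂ + g₂ * f₂ A₁ A₂ = -(f₁ A₁ A₂)^2 - 2*(f₂ A₁ A₂)^2 := by
  intro E f₁ f₂ A₁ A₂ g₁ g₂ h1 h2
  have hd1 : HasDerivAt (fun x => E x A₂)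
      ((M₀*κ/(2*c))*(2*A₁) + (N₀/c)*A₂^2 + (K₀/(4*c))*(4*A₁^3)
        + (K₂/c)*(2*A₁*A₂^2) + 0) A₁ := by
    have t1 := (((hasDerivAt_pow 2 A₁).add_const (2*A₂^2)).const_mul (M₀*κ/(2*c)))
    have t2 := (((hasDerivAt_id A₁).mul_const (A₂^2)).const_mul (N₀/c))
    have t3 := ((hasDerivAt_pow 4 A₁).const_mul (K₀/(4*c)))
    have t4 := (((hasDerivAt_pow 2 A₁).mul_const (A₂^2)).const_mul (K₂/c))
    have t5 : HasDerivAt (fun _ : ℝ => ((K₀+K₂)/(2*c))*A₂^4) 0 A₁ := hasDerivAt_const _ _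
    have := ((((t1.add t2).add t3).add t4).add t5)
    exact this.congr_deriv (by ring)
  have hd2 : HasDerivAt (fun y => E A₁ y)
      ((M₀*κ/(2*c))*(2*(2*A₂)) + (N₀/c)*(A₁*(2*A₂)) + 0
        + (K₂/c)*(A₁^2*(2*A₂)) + ((K₀+K₂)/(2*c))*(4*A₂^3)) A₂ := by
    have t1 := (((hasDerivAt_pow 2 A₂).const_mul (2:ℝ)).const_add (A₁^2)).const_mul (M₀*κ/(2*c))
    have t2 := (((hasDerivAt_pow 2 A₂).const_mul A₁).const_mul (N₀/c))
    have t3 : HasDerivAt (fun _ : ℝ => (K₀/(4*c))*A₁^4) 0 A₂ := hasDerivAt_const _ _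
    have t4 := (((hasDerivAt_pow 2 A₂).const_mul (A₁^2)).const_mul (K₂/c))
    have t5 := ((hasDerivAt_pow 4 A₂).const_mul ((K₀+K₂)/(2*c)))
    have := ((((t1.add t2).add t3).add t4).add t5)
    exact this.congr_deriv (by ring)
  have e1 := h1.unique hd1
  have e2 := h2.unique hd2
  subst e1 e2
  simp only [f₁, f₂]
  field_simp
  ring
end

section
/- Let M₀, κ, N₀, K₀, K₂ ∈ ℝ with K₀ ≠ K₂, K₀ + K₂ ≠ 0 and (K₀N₀² + (K₀−K₂)²M₀κ)/(K₀+K₂) < 0. Set a = N₀/(K₀−K₂) and b = (1/(K₀−K₂))·√(−(K₀N₀² + (K₀−K₂)²M₀κ)/(K₀+K₂)). Then the point (a, b) is an equilibrium of the hexagonal reduced system, i.e. M₀κ·a + N₀b² + K₀a³ + 2K₂ab² = 0 and M₀κ·b + N₀ab + (K₀+K₂)b³ + K₂ba² = 0. -/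
/-- The mixed-mode point `(a,b)` with `a = N₀/(K₀−K₂)` and
`b = (1/(K₀−K₂))√(−(K₀N₀² + (K₀−K₂)²M₀κ)/(K₀+K₂))` is an equilibrium of the
reduced hexagonal system. -/
theorem mixed_mode_equilibrium (M₀ κ N₀ K₀ K₂ : ℝ) (h1 : K₀ ≠ K₂) (h2 : K₀ + K₂ ≠ 0)
    (h3 : (K₀*N₀^2 + (K₀-K₂)^2*M₀*κ)/(K₀+K₂) < 0) :
    let a := N₀/(K₀-K₂)
    let b := (1/(K₀-K₂)) * Real.sqrt (-((K₀*N₀^2 + (K₀-K₂)^2*M₀*κ)/(K₀+K₂)))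
    M₀*κ*a + N₀*b^2 + K₀*a^3 + 2*K₂*a*b^2 = 0 ∧
    M₀*κ*b + N₀*a*b + (K₀+K₂)*b^3 + K₂*b*a^2 = 0 := by
  intro a b
  have hd : K₀ - K₂ ≠ 0 := sub_ne_zero.mpr h1
  have hs : (Real.sqrt (-((K₀*N₀^2 + (K₀-K₂)^2*M₀*κ)/(K₀+K₂))))^2
      = -((K₀*N₀^2 + (K₀-K₂)^2*M₀*κ)/(K₀+K₂)) := Real.sq_sqrt (by linarith)
  set s := Real.sqrt (-((K₀*N₀^2 + (K₀-K₂)^2*M₀*κ)/(K₀+K₂))) with hsdef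
  have hs2 : s^2 * (K₀+K₂) = -(K₀*N₀^2 + (K₀-K₂)^2*M₀*κ) := by
    rw [hs]; field_simp
  constructor
  · show M₀*κ*(N₀/(K₀-K₂)) + N₀*((1/(K₀-K₂))*s)^2 + K₀*(N₀/(K₀-K₂))^3
      + 2*K₂*(N₀/(K₀-K₂))*((1/(K₀-K₂))*s)^2 = 0
    field_simp
    linear_combination N₀ * hs2
  · show M₀*κ*((1/(K₀-K₂))*s) + N₀*(N₀/(K₀-K₂))*((1/(K₀-K₂))*s)
      + (K₀+K₂)*((1/(K₀-K₂))*s)^3 + K₂*((1/(K₀-K₂))*s)*(N₀/(K₀-K₂))^2 = 0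
    field_simp
    linear_combination s * hs2
end
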